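/- Let α, β > 0 and let λ satisfy −1/α − 1/β < λ < min(−1/α, −1/β). Define μ(n) = α for n even, β for n odd, and set K = max(1/β − 1/α − λ, 1/α − 1/β − λ)/(|λ|·(λ + 1/α + 1/β)). Then for every ε > 0 and every φ : ℕ → ℝ with |φ(n+1) − φ(n) − λ μ(n) φ(n)| ≤ ε μ(n) for all n, there exists x : ℕ → ℝ with x(n+1) = (1 + λ μ(n)) x(n) for all n and |φ(n) − x(n)| ≤ K ε for all n. -/

import Mathlib

theorem stmt_14 (α β l : ℝ) (hα : 0 < α) (hβ : 0 < β)
    (h1 : -1/α - 1/β < l) (h2 : l < min (-1/α) (-1/β))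
    (μ : ℕ → ℝ) (hμ : ∀ n, μ n = if Even n then α else β)
    (K : ℝ)
    (hK : K = max (1/β - 1/α - l) (1/α - 1/β - l) / (|l| * (l + 1/α + 1/β)))
    (ε : ℝ) (hε : 0 < ε) (φ : ℕ → ℝ)
    (hφ : ∀ n, |φ (n+1) - φ n - l * μ n * φ n| ≤ ε * μ n) :
    ∃ x : ℕ → ℝ, (∀ n, x (n+1) = (1 + l * μ n) * x n) ∧
      ∀ n, |φ n - x n| ≤ K * ε := by
  have hα' : α ≠ 0 := ne_of_gt hα
  have hβ' : β ≠ 0 := ne_of_gt hβ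
  have h2a : l < -1/α := lt_of_lt_of_le h2 (min_le_left _ _)
  have h2b : l < -1/β := lt_of_lt_of_le h2 (min_le_right _ _)
  have hla : l * α < -1 := (lt_div_iff₀ hα).mp h2a
  have hlb : l * β < -1 := (lt_div_iff₀ hβ).mp h2b
  have hl0 : l < 0 := by nlinarith
  set A : ℝ := -(1 + l * α) with hAdef
  set B : ℝ := -(1 + l * β) with hBdef
  have hA : 0 < A := by simp only [hAdef]; linarith
  have hB : 0 < B := by simp only [hBdef]; linarith
  have h1' : -(1/α) - 1/β < l := by rw [← neg_div]; exact h1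
  have hsum : 0 < l + 1/α + 1/β := by linarith
  set D : ℝ := (-l) * (l + 1/α + 1/β) with hDdef
  have hD : 0 < D := mul_pos (by linarith) hsum
  have h1q : 1 - A * B = α * β * D := by
    simp only [hAdef, hBdef, hDdef]; field_simp; ring
  have hq : 0 < 1 - A * B := by
    rw [h1q]; positivity
  set Me : ℝ := (β + α * B) / (1 - A * B) with hMedef
  set Mo : ℝ := (α + β * A) / (1 - A * B) with hModef
  have hMe0 : 0 ≤ Me := by
    apply div_nonneg _ hq.le; positivity
  have hMo0 : 0 ≤ Mo := by
    apply div_nonneg _ hq.le; positivity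
  have hrecE : A * Me + α = Mo := by
    simp only [hMedef, hModef]; field_simp; ring
  have hrecO : B * Mo + β = Me := by
    simp only [hMedef, hModef]; rw [mul_div_assoc', div_add' _ _ _ hq.ne', div_left_inj' hq.ne']; ring
  -- K equals max of the two constants divided by D
  have habsl : |l| = -l := abs_of_neg hl0
  have hKD : K = max (1/β - 1/α - l) (1/α - 1/β - l) / D := by
    rw [hK, habsl, hDdef]
  have hMeK : Me ≤ K := by
    have hMeval : Me = (1/α - 1/β - l) / D := by
      simp only [hMedef]
      rw [h1q]
      have hnum : β + α * B = α * β * (1/α - 1/β - l) := by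
        simp only [hBdef]; field_simp; ring
      rw [hnum, mul_div_mul_left _ _ (by positivity : α * β ≠ 0)]
    rw [hMeval, hKD]
    exact div_le_div_of_nonneg_right (le_max_right _ _) hD.le
  have hMoK : Mo ≤ K := by
    have hMoval : Mo = (1/β - 1/α - l) / D := by
      simp only [hModef]
      rw [h1q]
      have hnum : α + β * A = α * β * (1/β - 1/α - l) := by
        simp only [hAdef]; field_simp; ring
      rw [hnum, mul_div_mul_left _ _ (by positivity : α * β ≠ 0)]
    rw [hMoval, hKD]
    exact div_le_div_of_nonneg_right (le_max_left _ _) hD.le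
  refine ⟨fun n => Nat.rec (φ 0) (fun k xk => (1 + l * μ k) * xk) n, fun n => rfl, ?_⟩
  set x : ℕ → ℝ := fun n => Nat.rec (φ 0) (fun k xk => (1 + l * μ k) * xk) n with hxdef
  have key : ∀ n, |φ n - x n| ≤ ε * (if Even n then Me else Mo) := by
    intro n
    induction n with
    | zero =>
      have hx0 : x 0 = φ 0 := rfl
      rw [hx0, sub_self, abs_zero, if_pos Even.zero]
      positivity
    | succ n ih =>
      have hx : x (n + 1) = (1 + l * μ n) * x n := rfl
      have hdd : φ (n+1) - x (n+1)
          = (φ (n+1) - φ n - l * μ n * φ n) + (1 + l * μ n) * (φ n - x n) := by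
        rw [hx]; ring
      have hstep : |φ (n+1) - x (n+1)|
          ≤ |φ (n+1) - φ n - l * μ n * φ n| + |1 + l * μ n| * |φ n - x n| := by
        rw [hdd]; exact (abs_add_le _ _).trans (by rw [abs_mul])
      rcases Nat.even_or_odd n with he | ho
      · have hμn : μ n = α := by rw [hμ n, if_pos he]
        have habs : |1 + l * μ n| = A := by
          rw [hμn, abs_of_neg (by linarith : (1 : ℝ) + l * α < 0)]
        rw [if_pos he] at ih
        have : |φ (n+1) - x (n+1)| ≤ ε * α + A * (ε * Me) := by
          refine hstep.trans (add_le_add ?_ ?_)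
          · exact (hφ n).trans_eq (by rw [hμn])
          · rw [habs]; exact mul_le_mul_of_nonneg_left ih hA.le
        have hodd : ¬ Even (n+1) := by simp [Nat.even_add_one, he]
        rw [if_neg hodd]
        calc |φ (n+1) - x (n+1)| ≤ ε * α + A * (ε * Me) := this
          _ = ε * (A * Me + α) := by ring
          _ = ε * Mo := by rw [hrecE]
      · have hne : ¬ Even n := Nat.not_even_iff_odd.mpr ho
        have hμn : μ n = β := by rw [hμ n, if_neg hne]
        have habs : |1 + l * μ n| = B := by
          rw [hμn, abs_of_neg (by linarith : (1 : ℝ) + l * β < 0)]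
        rw [if_neg hne] at ih
        have : |φ (n+1) - x (n+1)| ≤ ε * β + B * (ε * Mo) := by
          refine hstep.trans (add_le_add ?_ ?_)
          · exact (hφ n).trans_eq (by rw [hμn])
          · rw [habs]; exact mul_le_mul_of_nonneg_left ih hB.le
        have heven : Even (n+1) := Nat.even_add_one.mpr hne
        rw [if_pos heven]
        calc |φ (n+1) - x (n+1)| ≤ ε * β + B * (ε * Mo) := this
          _ = ε * (B * Mo + β) := by ring
          _ = ε * Me := by rw [hrecO]
  intro n
  refine (key n).trans ?_
  by_cases h : Even n
  · rw [if_pos h]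
    calc ε * Me ≤ ε * K := mul_le_mul_of_nonneg_left hMeK hε.le
      _ = K * ε := mul_comm _ _
  · rw [if_neg h]
    calc ε * Mo ≤ ε * K := mul_le_mul_of_nonneg_left hMoK hε.le
      _ = K * ε := mul_comm _ _
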